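/- Let L be an SPS lattice, S a tight covering square of L, and i ∈ P_l. Then π̄_{l,i} = con_{L[S]}(y_{l,i}, y_{l,i+1}) and π̄_{l,i} ≤ ᾱ_r(S). -/

import Mathlib

namespace ForkCongruence

/-- A congruence of a lattice: an equivalence relation compatible with `⊔` and `⊓`. -/
structure LatCon (K : Type*) [Lattice K] where
  rel : K → K → Prop
  refl : ∀ x, rel x x
  symm : ∀ {x y}, rel x y → rel y x
  trans : ∀ {x y z}, rel x y → rel y z → rel x z
  sup_comp : ∀ {a b c d}, rel a b → rel c d → rel (a ⊔ c) (b ⊔ d)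
  inf_comp : ∀ {a b c d}, rel a b → rel c d → rel (a ⊓ c) (b ⊓ d)

namespace LatCon

variable {K : Type*} [Lattice K]

theorem rel_ext {θ ψ : LatCon K} (h : θ.rel = ψ.rel) : θ = ψ := by
  cases θ; cases ψ; cases h; rfl

instance : PartialOrder (LatCon K) where
  le θ ψ := ∀ ⦃x y⦄, θ.rel x y → ψ.rel x y
  le_refl _ _ _ h := h
  le_trans _ _ _ h₁ h₂ _ _ h := h₂ (h₁ h)
  le_antisymm θ ψ h₁ h₂ :=
    rel_ext (by funext x y; exact propext ⟨fun h => h₁ h, fun h => h₂ h⟩)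

/-- The smallest lattice congruence containing a binary relation. -/
def gen (s : K → K → Prop) : LatCon K where
  rel x y := ∀ θ : LatCon K, (∀ a b, s a b → θ.rel a b) → θ.rel x y
  refl x _ _ := LatCon.refl _ x
  symm h θ hs := θ.symm (h θ hs)
  trans h₁ h₂ θ hs := θ.trans (h₁ θ hs) (h₂ θ hs)
  sup_comp h₁ h₂ θ hs := θ.sup_comp (h₁ θ hs) (h₂ θ hs)
  inf_comp h₁ h₂ θ hs := θ.inf_comp (h₁ θ hs) (h₂ θ hs)

instance : SemilatticeSup (LatCon K) where
  sup θ ψ := gen (fun x y => θ.rel x y ∨ ψ.rel x y)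
  le_sup_left θ ψ x y h χ hχ := hχ x y (Or.inl h)
  le_sup_right θ ψ x y h χ hχ := hχ x y (Or.inr h)
  sup_le θ ψ χ h₁ h₂ x y h := h χ (fun a b hab => hab.elim (fun w => h₁ w) (fun w => h₂ w))

instance : SemilatticeInf (LatCon K) where
  inf θ ψ :=
    { rel := fun x y => θ.rel x y ∧ ψ.rel x y
      refl := fun x => ⟨θ.refl x, ψ.refl x⟩
      symm := fun h => ⟨θ.symm h.1, ψ.symm h.2⟩
      trans := fun h₁ h₂ => ⟨θ.trans h₁.1 h₂.1, ψ.trans h₁.2 h₂.2⟩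
      sup_comp := fun h₁ h₂ => ⟨θ.sup_comp h₁.1 h₂.1, ψ.sup_comp h₁.2 h₂.2⟩
      inf_comp := fun h₁ h₂ => ⟨θ.inf_comp h₁.1 h₂.1, ψ.inf_comp h₁.2 h₂.2⟩ }
  inf_le_left _ _ _ _ h := h.1
  inf_le_right _ _ _ _ h := h.2
  le_inf _ _ _ h₁ h₂ _ _ h := ⟨h₁ h, h₂ h⟩

instance : Lattice (LatCon K) :=
  { (inferInstance : SemilatticeSup (LatCon K)),
    (inferInstance : SemilatticeInf (LatCon K)) with }

instance : OrderBot (LatCon K) where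
  bot :=
    { rel := Eq
      refl := fun _ => rfl
      symm := Eq.symm
      trans := Eq.trans
      sup_comp := fun h₁ h₂ => by rw [h₁, h₂]
      inf_comp := fun h₁ h₂ => by rw [h₁, h₂] }
  bot_le θ x y h := h ▸ θ.refl x

/-- The principal congruence `con(a, b)`: the smallest congruence collapsing `a` and `b`. -/
def conOf (a b : K) : LatCon K := gen (fun x y => x = a ∧ y = b)

/-- The restriction of a congruence of `K` to a sublattice `L`. -/
def restrict (θ : LatCon K) (L : Sublattice K) : LatCon L where
  rel x y := θ.rel ↑x ↑y
  refl x := θ.refl ↑x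
  symm h := θ.symm h
  trans h₁ h₂ := θ.trans h₁ h₂
  sup_comp {a b c d} h₁ h₂ := by
    show θ.rel ↑(a ⊔ c) ↑(b ⊔ d)
    rw [Sublattice.coe_sup, Sublattice.coe_sup]
    exact θ.sup_comp h₁ h₂
  inf_comp {a b c d} h₁ h₂ := by
    show θ.rel ↑(a ⊓ c) ↑(b ⊓ d)
    rw [Sublattice.coe_inf, Sublattice.coe_inf]
    exact θ.inf_comp h₁ h₂

/-- A congruence `α` of the sublattice `L` extends to `K` if it is the restriction of some
congruence of `K`. -/
def ExtendsTo {L : Sublattice K} (α : LatCon L) : Prop :=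
  ∃ θ : LatCon K, θ.restrict L = α

/-- The minimal extension of a congruence of a sublattice `L` of `K`: the smallest congruence
of `K` containing it (viewed as a set of pairs). -/
def minExt {L : Sublattice K} (α : LatCon L) : LatCon K :=
  gen (fun x y => ∃ (hx : x ∈ L) (hy : y ∈ L), α.rel ⟨x, hx⟩ ⟨y, hy⟩)

end LatCon

/-- `K` is a congruence-preserving extension of its sublattice `L`: the restriction map is a
bijection from the congruences of `K` onto the congruences of `L`. -/
def IsCongPresExt {K : Type*} [Lattice K] (L : Sublattice K) : Prop :=
  Function.Bijective (fun θ : LatCon K => θ.restrict L)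

/-- A lattice is semimodular if `x ⊓ y ⋖ y` implies `x ⋖ x ⊔ y`. -/
def IsSemimodular (K : Type*) [Lattice K] : Prop :=
  ∀ x y : K, x ⊓ y ⋖ y → x ⋖ x ⊔ y

/-- A lattice is slim if its set of join-irreducible elements contains no three-element
antichain. -/
def IsSlim (K : Type*) [Lattice K] : Prop :=
  ¬ ∃ x y z : K, SupIrred x ∧ SupIrred y ∧ SupIrred z ∧
      ¬x ≤ y ∧ ¬y ≤ x ∧ ¬x ≤ z ∧ ¬z ≤ x ∧ ¬y ≤ z ∧ ¬z ≤ y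

/-- An SPS lattice: slim, planar (which follows from slimness together with semimodularity)
and semimodular. Finiteness is assumed separately as `[Finite K]`. -/
def IsSPS (K : Type*) [Lattice K] : Prop :=
  IsSemimodular K ∧ IsSlim K

/-- A covering square `S = {o, a_l, a_r, i}` of a lattice. -/
structure CovSquare (K : Type*) [Lattice K] where
  o : K
  al : K
  ar : K
  i : K
  al_ne_ar : al ≠ ar
  inf_eq : al ⊓ ar = o
  sup_eq : al ⊔ ar = i
  o_covby_al : o ⋖ al
  o_covby_ar : o ⋖ ar
  al_covby_i : al ⋖ i
  ar_covby_i : ar ⋖ i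

namespace CovSquare

variable {K : Type*} [Lattice K]

/-- A covering square is tight if `a_l` and `a_r` are the only lower covers of `i`. -/
def Tight (S : CovSquare K) : Prop :=
  ∀ x : K, x ⋖ S.i → x = S.al ∨ x = S.ar

/-- A covering square is wide if it is not tight. -/
def Wide (S : CovSquare K) : Prop := ¬ S.Tight

/-- A covering square is distributive if the principal ideal `↓i` is a distributive lattice. -/
def Distributive (S : CovSquare K) : Prop :=
  ∀ x y z : K, x ≤ S.i → y ≤ S.i → z ≤ S.i →
    x ⊓ (y ⊔ z) = (x ⊓ y) ⊔ (x ⊓ z)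

end CovSquare

/-- `K` together with the data below is the fork extension `L[S]` of the sublattice `L` of `K`
at the covering square `S` of `L`. The elements `xl k, yl k, zl k` represent
`x_{l,k+1}, y_{l,k+1}, z_{l,k+1}` of the construction (`0`-based indexing), and similarly
on the right. -/
structure ForkExtension (K : Type*) [Lattice K] (L : Sublattice K) (S : CovSquare L) where
  n : ℕ
  m : ℕ
  npos : 0 < n
  mpos : 0 < m
  t : K
  zl : ℕ → K
  zr : ℕ → K
  xl : ℕ → L
  yl : ℕ → L
  xr : ℕ → L
  yr : ℕ → L
  xl_zero : xl 0 = S.al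
  yl_zero : yl 0 = S.o
  xr_zero : xr 0 = S.ar
  yr_zero : yr 0 = S.o
  -- the successive covering squares `{y_{l,k+1}, x_{l,k+1}, y_{l,k}, x_{l,k}}` in `L`
  xl_succ_covby : ∀ k, k + 1 < n → xl (k + 1) ⋖ xl k
  yl_succ_covby : ∀ k, k + 1 < n → yl (k + 1) ⋖ yl k
  yl_covby_xl : ∀ k, k < n → yl k ⋖ xl k
  xl_succ_ne_yl : ∀ k, k + 1 < n → xl (k + 1) ≠ yl k
  xl_inf_yl : ∀ k, k + 1 < n → xl (k + 1) ⊓ yl k = yl (k + 1)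
  xl_sup_yl : ∀ k, k + 1 < n → xl (k + 1) ⊔ yl k = xl k
  -- `n` is largest possible
  left_max : ¬ ∃ x : L, x ⋖ xl (n - 1) ∧ x ≠ yl (n - 1) ∧
      x ⊓ yl (n - 1) ⋖ x ∧ x ⊓ yl (n - 1) ⋖ yl (n - 1) ∧ x ⊔ yl (n - 1) = xl (n - 1)
  -- the same on the right
  xr_succ_covby : ∀ k, k + 1 < m → xr (k + 1) ⋖ xr k
  yr_succ_covby : ∀ k, k + 1 < m → yr (k + 1) ⋖ yr k
  yr_covby_xr : ∀ k, k < m → yr k ⋖ xr k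
  xr_succ_ne_yr : ∀ k, k + 1 < m → xr (k + 1) ≠ yr k
  xr_inf_yr : ∀ k, k + 1 < m → xr (k + 1) ⊓ yr k = yr (k + 1)
  xr_sup_yr : ∀ k, k + 1 < m → xr (k + 1) ⊔ yr k = xr k
  right_max : ¬ ∃ x : L, x ⋖ xr (m - 1) ∧ x ≠ yr (m - 1) ∧
      x ⊓ yr (m - 1) ⋖ x ∧ x ⊓ yr (m - 1) ⋖ yr (m - 1) ∧ x ⊔ yr (m - 1) = xr (m - 1)
  -- the new elements
  t_not_mem : t ∉ L
  zl_not_mem : ∀ k, k < n → zl k ∉ L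
  zr_not_mem : ∀ k, k < m → zr k ∉ L
  mem_or_new : ∀ x : K, x ∈ L ∨ x = t ∨ (∃ k < n, x = zl k) ∨ (∃ k < m, x = zr k)
  -- `{o, z_{l,1}, z_{r,1}, a_l, a_r, t, i}` is a sublattice isomorphic to `S7`
  zl_sup_zr : zl 0 ⊔ zr 0 = t
  zl_zero_covby_t : zl 0 ⋖ t
  zr_zero_covby_t : zr 0 ⋖ t
  t_covby_i : t ⋖ (S.i : K)
  -- the chains `z_{l,1} ≻ ⋯ ≻ z_{l,n}` and `z_{r,1} ≻ ⋯ ≻ z_{r,m}`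
  zl_succ_covby : ∀ k, k + 1 < n → zl (k + 1) ⋖ zl k
  zr_succ_covby : ∀ k, k + 1 < m → zr (k + 1) ⋖ zr k
  -- `y_{l,k} ⋖ z_{l,k} ⋖ x_{l,k}` in `K`, and similarly on the right
  yl_covby_zl : ∀ k, k < n → (yl k : K) ⋖ zl k
  zl_covby_xl : ∀ k, k < n → zl k ⋖ (xl k : K)
  yr_covby_zr : ∀ k, k < m → (yr k : K) ⋖ zr k
  zr_covby_xr : ∀ k, k < m → zr k ⋖ (xr k : K)

namespace ForkExtension

variable {K : Type*} [Lattice K] {L : Sublattice K} {S : CovSquare L}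

/-- `x_{l,k+1}` is a (left) protrusion: it has at least three lower covers in `L`. -/
def ProtL (F : ForkExtension K L S) (k : ℕ) : Prop :=
  k < F.n ∧ ∃ u v w : L, u ≠ v ∧ u ≠ w ∧ v ≠ w ∧
    u ⋖ F.xl k ∧ v ⋖ F.xl k ∧ w ⋖ F.xl k

/-- `x_{r,k+1}` is a (right) protrusion: it has at least three lower covers in `L`. -/
def ProtR (F : ForkExtension K L S) (k : ℕ) : Prop :=
  k < F.m ∧ ∃ u v w : L, u ≠ v ∧ u ≠ w ∧ v ≠ w ∧
    u ⋖ F.xr k ∧ v ⋖ F.xr k ∧ w ⋖ F.xr k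

end ForkExtension




section Aux

variable {K : Type*} [Lattice K]

theorem LatCon.gen_le {s : K → K → Prop} {ψ : LatCon K} (h : ∀ a b, s a b → ψ.rel a b) :
    LatCon.gen s ≤ ψ := fun _ _ hxy => hxy ψ h

theorem LatCon.conOf_rel_self (a b : K) : (LatCon.conOf a b).rel a b :=
  fun _ hθ => hθ a b ⟨rfl, rfl⟩

theorem LatCon.conOf_le {a b : K} {ψ : LatCon K} (h : ψ.rel a b) : LatCon.conOf a b ≤ ψ :=
  LatCon.gen_le (fun p q hpq => by obtain ⟨rfl, rfl⟩ := hpq; exact h)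

/-- In a finite lattice, below any `a ≰ b` there is a join-irreducible not below `b`. -/
theorem exists_supIrred_le_not_le {α : Type*} [Lattice α] [Finite α] {a b : α}
    (h : ¬ a ≤ b) : ∃ j : α, SupIrred j ∧ j ≤ a ∧ ¬ j ≤ b := by
  obtain ⟨j, hj, hmin⟩ : ∃ j ∈ {c | c ≤ a ∧ ¬ c ≤ b},
      ∀ c ∈ {c : α | c ≤ a ∧ ¬ c ≤ b}, c ≤ j → j = c := by
    obtain ⟨j, hj⟩ := Set.Finite.exists_minimal (Set.toFinite {c | c ≤ a ∧ ¬ c ≤ b})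
      ⟨a, le_refl a, h⟩
    exact ⟨j, hj.1, fun c hc hcj => le_antisymm (hj.2 hc hcj) hcj⟩
  obtain ⟨hja, hjb⟩ := hj
  refine ⟨j, ⟨?_, ?_⟩, hja, hjb⟩
  · intro hmin'
    have h1 : b ⊓ j ≤ j := inf_le_right
    have h2 : j ≤ b ⊓ j := hmin' h1
    exact hjb (h2.trans inf_le_left)
  · intro c d hcd
    by_contra hco
    push_neg at hco
    have hc : c ≤ j := hcd ▸ le_sup_left
    have hd : d ≤ j := hcd ▸ le_sup_right
    have hcb : c ≤ b := by
      by_contra hcb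
      exact hco.1 (hmin c ⟨hc.trans hja, hcb⟩ hc).symm
    have hdb : d ≤ b := by
      by_contra hdb
      exact hco.2 (hmin d ⟨hd.trans hja, hdb⟩ hd).symm
    exact hjb (hcd ▸ sup_le hcb hdb)

/-- The key covering-geometry fact in a slim finite lattice: if `x` has three lower covers
`w, y, x'` (with `w` different from `y` and `x'`), the pair `y, x'` spans a covering square
with bottom `y' = x' ⊓ y`, and there is an element `g` with `y ⋖ g` and `x ⊓ g = y`, then
`w ⊓ y ≤ y'`. -/
theorem slim_third_cover_inf_le {α : Type*} [Lattice α] [Finite α] (hslim : IsSlim α)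
    {x y x' y' w g : α} (hyx : y ⋖ x) (hx'x : x' ⋖ x) (hy'y : y' ⋖ y) (hy'x' : y' ⋖ x')
    (hinf : x' ⊓ y = y') (hw : w ⋖ x) (hwy : w ≠ y) (hwx' : w ≠ x')
    (hyg : y ⋖ g) (hxg : x ⊓ g = y) :
    w ⊓ y ≤ y' := by
  -- basic non-inequalities
  have hwny : ¬ w ≤ y := by
    intro hle
    rcases hle.lt_or_eq with hlt | he
    · exact hw.2 hlt hyx.lt
    · exact hwy he
  have hx'ny : ¬ x' ≤ y := by
    intro hle
    have : x' ⊓ y = x' := inf_eq_left.2 hle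
    exact hy'x'.lt.ne' (hinf ▸ this.symm ▸ rfl)
  have hwnx' : ¬ w ≤ x' := by
    intro hle
    rcases hle.lt_or_eq with hlt | he
    · exact hw.2 hlt hx'x.lt
    · exact hwx' he
  have hgny : ¬ g ≤ y := fun hle => lt_irrefl y (lt_of_lt_of_le hyg.lt hle)
  have hynw : ¬ y ≤ w := by
    intro hle
    rcases hle.lt_or_eq with hlt | he
    · exact hyx.2 hlt hw.lt
    · exact hwy he.symm
  by_cases hbw : y' ≤ w
  · -- then `w ⊓ y = y'`
    have h1 : y' ≤ w ⊓ y := le_inf hbw hy'y.le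
    have h2 : w ⊓ y < y := lt_of_le_of_ne inf_le_right (fun he => hynw (inf_eq_right.1 he))
    rcases h1.lt_or_eq with hlt | he
    · exact absurd h2 (hy'y.2 hlt)
    · exact he.ge
  · by_contra hq
    by_cases hr : w ⊓ x' ≤ y'
    · -- `w` is beyond `x'` : contradiction with slimness using `g`
      obtain ⟨j1, hj1i, hj1a, hj1b⟩ := exists_supIrred_le_not_le hx'ny
      obtain ⟨j2, hj2i, hj2a, hj2b⟩ := exists_supIrred_le_not_le hwny
      obtain ⟨j3, hj3i, hj3a, hj3b⟩ := exists_supIrred_le_not_le hgny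
      refine absurd ?_ hslim
      refine ⟨j1, j2, j3, hj1i, hj2i, hj3i, ?_, ?_, ?_, ?_, ?_, ?_⟩
      · intro hle
        exact hj1b (((le_inf hj1a (hle.trans hj2a)).trans
          (by rw [inf_comm]; exact hr)).trans (hy'y.le))
      · intro hle
        exact hj2b (((le_inf (hle.trans hj1a) hj2a).trans
          (by rw [inf_comm] at hr; exact hr)).trans (hy'y.le))
      · intro hle
        exact hj1b (hxg ▸ le_inf (hj1a.trans hx'x.le) (hle.trans hj3a))
      · intro hle
        exact hj3b (hxg ▸ le_inf ((hle.trans hj1a).trans hx'x.le) hj3a)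
      · intro hle
        exact hj2b (hxg ▸ le_inf (hj2a.trans hw.le) (hle.trans hj3a))
      · intro hle
        exact hj3b (hxg ▸ le_inf ((hle.trans hj2a).trans hw.le) hj3a)
    · -- `w ⊓ y ≰ y'`, `w ⊓ x' ≰ y'`, `y' ≰ w` : contradiction with slimness
      obtain ⟨j1, hj1i, hj1a, hj1b⟩ := exists_supIrred_le_not_le hq
      obtain ⟨j2, hj2i, hj2a, hj2b⟩ := exists_supIrred_le_not_le hr
      obtain ⟨j3, hj3i, hj3a, hj3b⟩ := exists_supIrred_le_not_le hbw
      refine absurd ?_ hslim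
      refine ⟨j1, j2, j3, hj1i, hj2i, hj3i, ?_, ?_, ?_, ?_, ?_, ?_⟩
      · intro hle
        exact hj1b (hinf ▸ le_inf ((hle.trans hj2a).trans inf_le_right)
          (hj1a.trans inf_le_right))
      · intro hle
        exact hj2b (hinf ▸ le_inf (hj2a.trans inf_le_right)
          ((hle.trans hj1a).trans inf_le_right))
      · intro hle
        exact hj1b (hle.trans hj3a)
      · intro hle
        exact hj3b ((hle.trans hj1a).trans inf_le_left)
      · intro hle
        exact hj2b (hle.trans hj3a)
      · intro hle
        exact hj3b ((hle.trans hj2a).trans inf_le_left)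

end Aux

/-- Every congruence of `K = L[S]` collapsing `(a_r, i)` collapses `(y_{l,k}, y_{l,k+1})`. -/
theorem rel_yl_of_rel_ar_i
    {K : Type*} [Lattice K] [Finite K] {L : Sublattice K} (hL : IsSPS L)
    {S : CovSquare L} (F : ForkExtension K L S)
    (k : ℕ) (hk : F.ProtL k) (hk1 : k + 1 < F.n)
    (θ : LatCon K) (hθ : θ.rel (S.ar : K) (S.i : K)) :
    θ.rel (F.yl k : K) (F.yl (k + 1) : K) := by
  -- Step 1: `θ` collapses `(o, a_l)`.
  have hbase : θ.rel (S.o : K) (S.al : K) := by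
    have h1 := θ.inf_comp (θ.refl (S.al : K)) hθ
    have e1 : (S.al : K) ⊓ (S.ar : K) = (S.o : K) := by
      rw [← Sublattice.coe_inf, S.inf_eq]
    have e2 : (S.al : K) ⊓ (S.i : K) = (S.al : K) := inf_eq_left.2 S.al_covby_i.le
    rwa [e1, e2] at h1
  -- Step 2: `θ` collapses `(y_{l,j}, x_{l,j})` for all `j < n`.
  have V : ∀ j, j < F.n → θ.rel (F.yl j : K) (F.xl j : K) := by
    intro j
    induction j with
    | zero =>
      intro _
      rw [F.yl_zero, F.xl_zero]
      exact hbase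
    | succ j ih =>
      intro hj
      have hVj := ih (Nat.lt_of_succ_lt hj)
      have h2 := θ.inf_comp hVj (θ.refl (F.xl (j + 1) : K))
      have e1 : (F.yl j : K) ⊓ (F.xl (j + 1) : K) = (F.yl (j + 1) : K) := by
        rw [← Sublattice.coe_inf, inf_comm, F.xl_inf_yl j hj]
      have e2 : (F.xl j : K) ⊓ (F.xl (j + 1) : K) = (F.xl (j + 1) : K) :=
        inf_eq_right.2 (F.xl_succ_covby j hj).le
      rwa [e1, e2] at h2
  -- Step 3: pick a third lower cover `w` of `x_{l,k}`.
  obtain ⟨hkn, u, v, w0, huv, huw, hvw, hu, hv, hw0⟩ := hk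
  have hpick : ∃ w : L, w ⋖ F.xl k ∧ w ≠ F.yl k ∧ w ≠ F.xl (k + 1) := by
    by_cases h1 : u ≠ F.yl k ∧ u ≠ F.xl (k + 1)
    · exact ⟨u, hu, h1.1, h1.2⟩
    by_cases h2 : v ≠ F.yl k ∧ v ≠ F.xl (k + 1)
    · exact ⟨v, hv, h2.1, h2.2⟩
    by_cases h3 : w0 ≠ F.yl k ∧ w0 ≠ F.xl (k + 1)
    · exact ⟨w0, hw0, h3.1, h3.2⟩
    push_neg at h1 h2 h3
    by_cases hu1 : u = F.yl k <;> by_cases hv1 : v = F.yl k <;>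
      by_cases hw1 : w0 = F.yl k <;> simp_all
  obtain ⟨w, hw, hwy, hwx'⟩ := hpick
  -- the element `g` above `y_{l,k}`
  have hg : ∃ g : L, F.yl k ⋖ g ∧ F.xl k ⊓ g = F.yl k := by
    cases k with
    | zero =>
      refine ⟨S.ar, ?_, ?_⟩
      · rw [F.yl_zero]; exact S.o_covby_ar
      · rw [F.xl_zero, F.yl_zero]; exact S.inf_eq
    | succ k' =>
      refine ⟨F.yl k', F.yl_succ_covby k' (by omega), ?_⟩
      rw [F.xl_inf_yl k' (by omega)]
  obtain ⟨g, hyg, hxg⟩ := hg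
  -- Step 4: the crux, entirely inside `L`
  have hqle : w ⊓ F.yl k ≤ F.yl (k + 1) :=
    slim_third_cover_inf_le hL.2
      (F.yl_covby_xl k hkn) (F.xl_succ_covby k hk1) (F.yl_succ_covby k hk1)
      (F.yl_covby_xl (k + 1) hk1)
      (F.xl_inf_yl k hk1) hw hwy hwx' hyg hxg
  -- Step 5: assemble the congruence computation in `K`
  have hqw : θ.rel ((w ⊓ F.yl k : L) : K) (w : K) := by
    have h1 := θ.inf_comp (θ.refl (w : K)) (V k hkn)
    have e1 : (w : K) ⊓ (F.yl k : K) = ((w ⊓ F.yl k : L) : K) := (Sublattice.coe_inf _ _).symm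
    have e2 : (w : K) ⊓ (F.xl k : K) = (w : K) := inf_eq_left.2 hw.le
    rwa [e1, e2] at h1
  have h5 := θ.sup_comp hqw (V (k + 1) hk1)
  have e3 : ((w ⊓ F.yl k : L) : K) ⊔ (F.yl (k + 1) : K) = (F.yl (k + 1) : K) :=
    sup_eq_right.2 hqle
  have hwsup : w ⊔ F.xl (k + 1) = F.xl k := by
    have hlt : F.xl (k + 1) < w ⊔ F.xl (k + 1) :=
      lt_of_le_of_ne le_sup_right (by
        intro he
        have hwle : w ≤ F.xl (k + 1) := sup_eq_right.1 he.symm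
        rcases hwle.lt_or_eq with hlt' | he'
        · exact hw.2 hlt' (F.xl_succ_covby k hk1).lt
        · exact hwx' he')
    have hle : w ⊔ F.xl (k + 1) ≤ F.xl k := sup_le hw.le (F.xl_succ_covby k hk1).le
    rcases hle.lt_or_eq with hlt' | he'
    · exact absurd hlt' ((F.xl_succ_covby k hk1).2 hlt)
    · exact he'
  have e4 : (w : K) ⊔ (F.xl (k + 1) : K) = (F.xl k : K) := by
    rw [← Sublattice.coe_sup, hwsup]
  rw [e3, e4] at h5
  exact θ.symm (θ.trans h5 (θ.symm (V k hkn)))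

/-- **Lemma 9.** Let `L` be an SPS lattice, `S` a tight covering square of `L`, and `k ∈ P_l`
(so `x_{l,k}` is a protrusion; `k + 1 ≤ n` so that `y_{l,k+1}` exists). Then in `L[S]`
(realized as the ambient lattice `K`), `π̄_{l,k} = con_{L[S]}(y_{l,k}, y_{l,k+1})` and
`π̄_{l,k} ≤ ᾱ_r(S) = con_{L[S]}(a_r, i)`. -/
theorem protrusion_congruence_eq_and_le
    {K : Type*} [Lattice K] [Finite K] (L : Sublattice K) (hL : IsSPS L)
    (S : CovSquare L) (F : ForkExtension K L S) (hS : S.Tight)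
    (k : ℕ) (hk : F.ProtL k) (hk1 : k + 1 < F.n) :
    LatCon.minExt (LatCon.conOf (F.yl k) (F.yl (k + 1))) =
        LatCon.conOf (F.yl k : K) (F.yl (k + 1) : K) ∧
      LatCon.minExt (LatCon.conOf (F.yl k) (F.yl (k + 1))) ≤
        LatCon.conOf (S.ar : K) (S.i : K) := by
  have heq : LatCon.minExt (LatCon.conOf (F.yl k) (F.yl (k + 1))) =
      LatCon.conOf (F.yl k : K) (F.yl (k + 1) : K) := by
    apply le_antisymm
    · apply LatCon.gen_le
      rintro a b ⟨ha, hb, hab⟩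
      exact hab ((LatCon.conOf (F.yl k : K) (F.yl (k + 1) : K)).restrict L)
        (fun p q hpq => by
          obtain ⟨rfl, rfl⟩ := hpq
          exact LatCon.conOf_rel_self _ _)
    · apply LatCon.conOf_le
      exact fun ψ hψ => hψ _ _ ⟨(F.yl k).2, (F.yl (k + 1)).2, LatCon.conOf_rel_self _ _⟩
  refine ⟨heq, ?_⟩
  rw [heq]
  apply LatCon.conOf_le
  intro ψ hψ
  exact rel_yl_of_rel_ar_i hL F k hk hk1 ψ (hψ _ _ ⟨rfl, rfl⟩)

end ForkCongruence
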